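/- Let k be an algebraically closed field of characteristic 2 and let F be a formal power series over k with F(0) = 0 such that the coefficient of sⁿ in F is nonzero for some odd n; let n₀ be the smallest odd n with this property. Then the following are equivalent: (1) there exists a formal power series h over k such that F + h⁴ is nonzero and the order of F + h⁴ is odd; (2) for every n < n₀, if the coefficient of sⁿ in F is nonzero then n is divisible by 4. (This is the power-series characterization of pseudo-tameness: condition (2) says that every non-vanishing term of F of degree smaller than ord(dF) + 1 = n₀ has degree a multiple of four.) -/

import Mathlib

open PowerSeries

private lemma coeff_sq_char_two {k : Type*} [CommRing k] [CharP k 2]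
    (h : PowerSeries k) (n : ℕ) :
    PowerSeries.coeff (R := k) n (h ^ 2) =
      if 2 ∣ n then (PowerSeries.coeff (R := k) (n / 2) h) ^ 2 else 0 := by
  rw [sq, PowerSeries.coeff_mul]
  by_cases hd : 2 ∣ n
  · obtain ⟨j, rfl⟩ := hd
    rw [if_pos ⟨j, rfl⟩]
    have hmem : ((j, j) : ℕ × ℕ) ∈ Finset.HasAntidiagonal.antidiagonal (2 * j) := by
      simp [two_mul]
    rw [← Finset.add_sum_erase _ _ hmem]
    have hz : ∑ p ∈ (Finset.HasAntidiagonal.antidiagonal (2 * j)).erase (j, j),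
        PowerSeries.coeff (R := k) p.1 h * PowerSeries.coeff (R := k) p.2 h = 0 := by
      apply Finset.sum_involution (g := fun p _ => (p.2, p.1))
      · intro p _
        rw [mul_comm]
        exact CharTwo.add_self_eq_zero _
      · rintro ⟨p1, p2⟩ hp _
        rcases Finset.mem_erase.1 hp with ⟨hne, hp'⟩
        rw [Finset.HasAntidiagonal.mem_antidiagonal] at hp'
        intro hc
        simp only [Prod.mk.injEq] at hc
        apply hne
        simp only [Prod.mk.injEq]
        omega
      · rintro ⟨p1, p2⟩ hp
        rcases Finset.mem_erase.1 hp with ⟨hne, hp'⟩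
        rw [Finset.HasAntidiagonal.mem_antidiagonal] at hp'
        simp only [ne_eq, Prod.mk.injEq] at hne
        refine Finset.mem_erase.2 ⟨?_, ?_⟩
        · simp only [ne_eq, Prod.mk.injEq]
          omega
        · rw [Finset.HasAntidiagonal.mem_antidiagonal]; omega
      · intro p _; rfl
    rw [hz, add_zero, sq]
    have hjj : 2 * j / 2 = j := by omega
    rw [hjj]
  · rw [if_neg hd]
    apply Finset.sum_involution (g := fun p _ => (p.2, p.1))
    · intro p _
      rw [mul_comm]
      exact CharTwo.add_self_eq_zero _
    · rintro ⟨p1, p2⟩ hp _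
      rw [Finset.HasAntidiagonal.mem_antidiagonal] at hp
      intro hc
      simp only [Prod.mk.injEq] at hc
      exact hd ⟨p1, by omega⟩
    · intro p hp
      rw [Finset.HasAntidiagonal.mem_antidiagonal] at hp
      rw [Finset.HasAntidiagonal.mem_antidiagonal]; omega
    · intro p _; rfl

private lemma coeff_pow4_char_two {k : Type*} [CommRing k] [CharP k 2]
    (h : PowerSeries k) (n : ℕ) :
    PowerSeries.coeff (R := k) n (h ^ 4) =
      if 4 ∣ n then (PowerSeries.coeff (R := k) (n / 4) h) ^ 4 else 0 := by
  have h4 : h ^ 4 = (h ^ 2) ^ 2 := by ring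
  rw [h4, coeff_sq_char_two]
  by_cases h2 : 2 ∣ n
  · rw [if_pos h2, coeff_sq_char_two]
    by_cases h4' : 4 ∣ n
    · have h22 : 2 ∣ n / 2 := by omega
      rw [if_pos h22, if_pos h4']
      have : n / 2 / 2 = n / 4 := by omega
      rw [this]; ring
    · have h22 : ¬ 2 ∣ n / 2 := by omega
      rw [if_neg h22, if_neg h4']
      ring
  · have h4' : ¬ 4 ∣ n := by omega
    rw [if_neg h2, if_neg h4']

/-- **Power-series characterization of pseudo-tameness.** Let `k` be algebraically
closed of characteristic two, `F ∈ k⟦s⟧` with `F(0) = 0`, and let `n₀` be the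
smallest odd `n` with a nonzero coefficient of `sⁿ` in `F`. Then some `h ∈ k⟦s⟧`
makes `F + h⁴` nonzero of odd order if and only if every `n < n₀` with nonzero
coefficient of `sⁿ` in `F` is divisible by `4`. -/
theorem pseudoTame_powerSeries_characterization
    (k : Type*) [Field k] [IsAlgClosed k] [CharP k 2]
    (F : PowerSeries k) (hF0 : PowerSeries.coeff (R := k) 0 F = 0)
    (n₀ : ℕ) (hodd : Odd n₀) (hne : PowerSeries.coeff (R := k) n₀ F ≠ 0)
    (hmin : ∀ m : ℕ, m < n₀ → Odd m → PowerSeries.coeff (R := k) m F = 0) :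
    (∃ h : PowerSeries k, ∃ n : ℕ, Odd n ∧
        (∀ m : ℕ, m < n → PowerSeries.coeff (R := k) m (F + h ^ 4) = 0) ∧
        PowerSeries.coeff (R := k) n (F + h ^ 4) ≠ 0) ↔
      (∀ n : ℕ, n < n₀ → PowerSeries.coeff (R := k) n F ≠ 0 → 4 ∣ n) := by
  constructor
  · rintro ⟨h, n, hn_odd, hlow, hne'⟩ m hm hFm
    -- at odd indices, coeff of h^4 vanishes
    have hodd4 : ∀ j : ℕ, Odd j → PowerSeries.coeff (R := k) j (h ^ 4) = 0 := by
      intro j hj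
      rw [coeff_pow4_char_two, if_neg]
      rintro ⟨c, rfl⟩
      exact (Nat.not_odd_iff_even.mpr ⟨2 * c, by ring⟩) hj
    -- n = n₀
    have hn_ge : n₀ ≤ n := by
      by_contra hc
      push_neg at hc
      have := hne'
      rw [map_add, hodd4 n hn_odd, add_zero] at this
      exact this (hmin n hc hn_odd)
    have hn_le : n ≤ n₀ := by
      by_contra hc
      push_neg at hc
      have h0 := hlow n₀ hc
      rw [map_add, hodd4 n₀ hodd, add_zero] at h0
      exact hne h0
    have hn : n = n₀ := le_antisymm hn_le hn_ge
    subst hn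
    have h0 : PowerSeries.coeff (R := k) m (F + h ^ 4) = 0 := hlow m hm
    rw [map_add] at h0
    have h4m : PowerSeries.coeff (R := k) m (h ^ 4) ≠ 0 := by
      intro hz
      rw [hz, add_zero] at h0
      exact hFm h0
    rw [coeff_pow4_char_two] at h4m
    by_contra hc
    rw [if_neg hc] at h4m
    exact h4m rfl
  · intro hdiv
    have root : ∀ a : k, ∃ b : k, b ^ 4 = a := fun a =>
      IsAlgClosed.exists_pow_nat_eq a (n := 4) (by norm_num)
    choose r hr using root
    refine ⟨PowerSeries.mk fun j => if 4 * j < n₀ then r (PowerSeries.coeff (R := k) (4 * j) F) else 0,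
      n₀, hodd, ?_, ?_⟩
    · intro m hm
      rw [map_add, coeff_pow4_char_two]
      by_cases h4 : 4 ∣ m
      · obtain ⟨j, rfl⟩ := h4
        rw [if_pos ⟨j, rfl⟩]
        have : (4 * j) / 4 = j := by omega
        rw [this, PowerSeries.coeff_mk, if_pos hm, hr]
        exact CharTwo.add_self_eq_zero _
      · rw [if_neg h4, add_zero]
        by_contra hc
        exact h4 (hdiv m hm hc)
    · rw [map_add, coeff_pow4_char_two, if_neg, add_zero]
      · exact hne
      · rintro ⟨c, rfl⟩
        exact (Nat.not_odd_iff_even.mpr ⟨2 * c, by ring⟩) hodd
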